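/- Edgeworth–Cornish-Fisher consistency at first order: let Gₙ(x) = Φ(x) − (η₃(x²+2)/(12√n))φ(x) + rₙ(x) with sup_x |rₙ(x)| = o(n^{-1/2}), where Φ and φ are the standard normal cdf and pdf and η₃ ∈ ℝ. Then for each fixed v ∈ (0,1), any solution xₙ of Gₙ(xₙ) = v satisfies xₙ = Φ^{-1}(v) + (η₃/(12√n))((Φ^{-1}(v))² + 2) + o(n^{-1/2}). -/

import Mathlib

open MeasureTheory Filter Real

/-- Standard normal density. -/
noncomputable def gauss (x : ℝ) : ℝ := (Real.sqrt (2 * Real.pi))⁻¹ * Real.exp (-x ^ 2 / 2)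

/-- Standard normal cdf. -/
noncomputable def normCDF (x : ℝ) : ℝ := ∫ t in Set.Iic x, gauss t

lemma gauss_pos (x : ℝ) : 0 < gauss x := by
  unfold gauss
  positivity

lemma gauss_cont : Continuous gauss := by
  unfold gauss
  fun_prop

lemma gauss_integrable : Integrable gauss := by
  have h : Integrable (fun x : ℝ => Real.exp (-(1/2) * x ^ 2)) :=
    integrable_exp_neg_mul_sq (by norm_num)
  have : gauss = fun x => (Real.sqrt (2 * Real.pi))⁻¹ * Real.exp (-(1/2) * x ^ 2) := by
    funext x; unfold gauss; ring_nf
  rw [this]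
  exact h.const_mul _

lemma hasDerivAt_normCDF (x : ℝ) : HasDerivAt normCDF (gauss x) x := by
  have key : ∀ z : ℝ, normCDF z = normCDF 0 + ∫ t in (0:ℝ)..z, gauss t := by
    intro z
    have := intervalIntegral.integral_Iic_sub_Iic
      (gauss_integrable.integrableOn (s := Set.Iic 0))
      (gauss_integrable.integrableOn (s := Set.Iic z))
    unfold normCDF
    linarith [this]
  have h1 : HasDerivAt (fun z => normCDF 0 + ∫ t in (0:ℝ)..z, gauss t) (gauss x) x := by
    have := intervalIntegral.integral_hasDerivAt_right
      (gauss_integrable.intervalIntegrable (a := 0) (b := x))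
      ((gauss_cont.stronglyMeasurableAtFilter _ _))
      gauss_cont.continuousAt
    exact this.const_add _
  exact h1.congr_of_eventuallyEq (Filter.Eventually.of_forall fun z => (key z))

lemma normCDF_cont : Continuous normCDF :=
  continuous_iff_continuousAt.mpr fun z => (hasDerivAt_normCDF z).continuousAt

lemma normCDF_strictMono : StrictMono normCDF :=
  strictMono_of_deriv_pos fun z => by
    rw [(hasDerivAt_normCDF z).deriv]; exact gauss_pos z

lemma gauss_bound (z : ℝ) : (z ^ 2 + 2) * gauss z ≤ 1 := by
  have h1 : z ^ 2 / 2 + 1 ≤ Real.exp (z ^ 2 / 2) := Real.add_one_le_exp _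
  have h2 : (z ^ 2 + 2) * Real.exp (-z ^ 2 / 2) ≤ 2 := by
    have he : Real.exp (-z ^ 2 / 2) = (Real.exp (z ^ 2 / 2))⁻¹ := by
      rw [← Real.exp_neg]; ring_nf
    rw [he]
    rw [mul_inv_le_iff₀ (Real.exp_pos _)]
    nlinarith [Real.exp_pos (z ^ 2 / 2)]
  have h3 : (2:ℝ) ≤ Real.sqrt (2 * Real.pi) := by
    have : ((2:ℝ))^2 ≤ 2 * Real.pi := by nlinarith [Real.pi_gt_three]
    nlinarith [Real.sq_sqrt (by positivity : (0:ℝ) ≤ 2 * Real.pi),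
      Real.sqrt_nonneg (2 * Real.pi)]
  unfold gauss
  have h4 : (Real.sqrt (2 * Real.pi))⁻¹ ≤ 1/2 := by
    rw [inv_le_comm₀ (by linarith) (by norm_num)]; linarith
  have h5 : 0 ≤ (z ^ 2 + 2) * Real.exp (-z ^ 2 / 2) := by positivity
  calc (z ^ 2 + 2) * ((Real.sqrt (2 * Real.pi))⁻¹ * Real.exp (-z ^ 2 / 2))
      = (Real.sqrt (2 * Real.pi))⁻¹ * ((z ^ 2 + 2) * Real.exp (-z ^ 2 / 2)) := by ring
    _ ≤ (1/2) * 2 := by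
        apply mul_le_mul h4 h2 h5 (by norm_num)
    _ = 1 := by norm_num


/-- Edgeworth–Cornish-Fisher consistency at first order: a uniform one-term Edgeworth
expansion of Gₙ yields the corresponding one-term Cornish–Fisher expansion of quantiles. -/
theorem cornish_fisher_first_order (η₃ : ℝ) (G : ℕ → ℝ → ℝ)
    (hcont : ∀ n, Continuous (G n)) (hmono : ∀ n, StrictMono (G n))
    (s : ℕ → ℝ)
    (hs : ∀ n : ℕ, 1 ≤ n → ∀ x : ℝ,
      |G n x - (normCDF x - η₃ * (x ^ 2 + 2) / (12 * Real.sqrt n) * gauss x)| ≤ s n)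
    (hso : Tendsto (fun (n : ℕ) => Real.sqrt n * s n) atTop (nhds 0))
    (v : ℝ) (hv : v ∈ Set.Ioo (0 : ℝ) 1)
    (y : ℝ) (hy : normCDF y = v)
    (x : ℕ → ℝ) (hx : ∀ n, G n (x n) = v) :
    Tendsto (fun (n : ℕ) =>
        Real.sqrt n * (x n - (y + η₃ / (12 * Real.sqrt n) * (y ^ 2 + 2))))
      atTop (nhds 0) := by
  -- basic facts
  have hsqpos : ∀ n : ℕ, 1 ≤ n → 0 < Real.sqrt n := fun n hn => by
    apply Real.sqrt_pos.mpr; exact_mod_cast Nat.pos_of_ne_zero (by omega)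
  have hsqtop : Tendsto (fun n : ℕ => Real.sqrt n) atTop atTop := by
    have h1 : Tendsto (fun z : ℝ => z ^ ((1:ℝ)/2)) atTop atTop :=
      tendsto_rpow_atTop (by norm_num)
    have h2 : Tendsto Real.sqrt atTop atTop := by
      apply h1.congr' ((eventually_ge_atTop (0:ℝ)).mono fun z hz => ?_)
      rw [Real.sqrt_eq_rpow]
    exact h2.comp tendsto_natCast_atTop_atTop
  have hinv : Tendsto (fun n : ℕ => (Real.sqrt n)⁻¹) atTop (nhds 0) :=
    hsqtop.inv_tendsto_atTop
  have hs0 : Tendsto s atTop (nhds 0) := by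
    have : Tendsto (fun n : ℕ => (Real.sqrt n * s n) * (Real.sqrt n)⁻¹) atTop (nhds 0) := by
      simpa using hso.mul hinv
    apply this.congr' ((eventually_ge_atTop 1).mono fun n hn => ?_)
    field_simp [(hsqpos n hn).ne']
  -- key inequality at x n
  have hkey : ∀ n : ℕ, 1 ≤ n →
      |v - (normCDF (x n) - η₃ * ((x n) ^ 2 + 2) / (12 * Real.sqrt n) * gauss (x n))| ≤ s n := by
    intro n hn
    have := hs n hn (x n)
    rwa [hx n] at this
  -- the Edgeworth correction term bound
  have hterm : ∀ n : ℕ, 1 ≤ n → ∀ z : ℝ,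
      |η₃ * (z ^ 2 + 2) / (12 * Real.sqrt n) * gauss z| ≤ |η₃| * (Real.sqrt n)⁻¹ / 12 := by
    intro n hn z
    have h1 : 0 < Real.sqrt n := hsqpos n hn
    have h2 : 0 < z ^ 2 + 2 := by positivity
    have heq : |η₃ * (z ^ 2 + 2) / (12 * Real.sqrt n) * gauss z|
        = |η₃| * ((z ^ 2 + 2) * gauss z) / (12 * Real.sqrt n) := by
      rw [abs_mul, abs_div, abs_mul, abs_of_pos (gauss_pos z), abs_of_pos h2,
        abs_of_pos (by positivity : (0:ℝ) < 12 * Real.sqrt n)]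
      ring
    rw [heq]
    have h3 : |η₃| * ((z ^ 2 + 2) * gauss z) ≤ |η₃| * 1 :=
      mul_le_mul_of_nonneg_left (gauss_bound z) (abs_nonneg _)
    calc |η₃| * ((z ^ 2 + 2) * gauss z) / (12 * Real.sqrt n)
        ≤ |η₃| * 1 / (12 * Real.sqrt n) := by
          gcongr
      _ = |η₃| * (Real.sqrt n)⁻¹ / 12 := by
          rw [mul_one, div_eq_mul_inv, div_eq_mul_inv, mul_inv]
          ring
  -- Step B : normCDF (x n) → v
  have hFx : Tendsto (fun n => normCDF (x n)) atTop (nhds v) := by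
    rw [tendsto_iff_dist_tendsto_zero]
    have hb : Tendsto (fun n : ℕ => |η₃| * (Real.sqrt n)⁻¹ / 12 + s n) atTop (nhds 0) := by
      have h1 : Tendsto (fun n : ℕ => |η₃| * (Real.sqrt n)⁻¹ / 12) atTop (nhds 0) := by
        have := (hinv.const_mul (|η₃|)).div_const 12
        simpa using this
      simpa using h1.add hs0
    apply squeeze_zero' (Eventually.of_forall fun n => dist_nonneg)
      ((eventually_ge_atTop 1).mono fun n hn => ?_) hb
    have h1 := hkey n hn
    have h2 := hterm n hn (x n)
    rw [Real.dist_eq]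
    calc |normCDF (x n) - v|
        = |(η₃ * ((x n) ^ 2 + 2) / (12 * Real.sqrt n) * gauss (x n)) -
            (v - (normCDF (x n) - η₃ * ((x n) ^ 2 + 2) / (12 * Real.sqrt n) * gauss (x n)))| := by
          congr 1; ring
      _ ≤ |η₃ * ((x n) ^ 2 + 2) / (12 * Real.sqrt n) * gauss (x n)| +
            |v - (normCDF (x n) - η₃ * ((x n) ^ 2 + 2) / (12 * Real.sqrt n) * gauss (x n))| :=
          abs_sub _ _
      _ ≤ |η₃| * (Real.sqrt n)⁻¹ / 12 + s n := add_le_add h2 h1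
  -- Step C : x n → y
  have hxy : Tendsto x atTop (nhds y) := by
    rw [Metric.tendsto_atTop]
    intro ε hε
    have hδ1 : 0 < normCDF (y + ε) - v := by
      rw [← hy]; exact sub_pos.mpr (normCDF_strictMono (by linarith))
    have hδ2 : 0 < v - normCDF (y - ε) := by
      rw [← hy]; exact sub_pos.mpr (normCDF_strictMono (by linarith))
    have := (Metric.tendsto_atTop.mp hFx) (min (normCDF (y + ε) - v) (v - normCDF (y - ε)))
      (lt_min hδ1 hδ2)
    obtain ⟨N, hN⟩ := this
    refine ⟨N, fun n hn => ?_⟩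
    have h := hN n hn
    rw [Real.dist_eq] at h ⊢
    have h1 : normCDF (x n) < normCDF (y + ε) := by
      have := (abs_lt.mp h).2
      have := min_le_left (normCDF (y + ε) - v) (v - normCDF (y - ε))
      linarith
    have h2 : normCDF (y - ε) < normCDF (x n) := by
      have := (abs_lt.mp h).1
      have := min_le_right (normCDF (y + ε) - v) (v - normCDF (y - ε))
      linarith
    have h3 : x n < y + ε := normCDF_strictMono.lt_iff_lt.mp h1
    have h4 : y - ε < x n := normCDF_strictMono.lt_iff_lt.mp h2
    rw [abs_lt]; constructor <;> linarith
  -- Step D : mean value theorem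
  have hmvt : ∀ n : ℕ, ∃ ξ : ℝ, |ξ - y| ≤ |x n - y| ∧
      normCDF (x n) - normCDF y = gauss ξ * (x n - y) := by
    intro n
    rcases lt_trichotomy (x n) y with h | h | h
    · obtain ⟨c, hc, hc2⟩ := exists_hasDerivAt_eq_slope normCDF gauss h
        (normCDF_cont.continuousOn) (fun z _ => hasDerivAt_normCDF z)
      refine ⟨c, ?_, ?_⟩
      · have := hc.1; have := hc.2
        calc |c - y| ≤ y - x n := abs_le.mpr ⟨by linarith, by linarith⟩
          _ ≤ |x n - y| := by
              have := neg_abs_le (x n - y); linarith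
      · have hne : y - x n ≠ 0 := by linarith
        field_simp at hc2
        linarith [hc2]
    · exact ⟨y, by simp [h], by simp [h]⟩
    · obtain ⟨c, hc, hc2⟩ := exists_hasDerivAt_eq_slope normCDF gauss h
        (normCDF_cont.continuousOn) (fun z _ => hasDerivAt_normCDF z)
      refine ⟨c, ?_, ?_⟩
      · have := hc.1; have := hc.2
        calc |c - y| ≤ x n - y := abs_le.mpr ⟨by linarith, by linarith⟩
          _ ≤ |x n - y| := le_abs_self _
      · have hne : x n - y ≠ 0 := by intro hz; linarith [sub_eq_zero.mp hz]
        field_simp at hc2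
        linarith [hc2]
  choose ξ hξ1 hξ2 using hmvt
  -- Step E : ξ → y
  have hξy : Tendsto ξ atTop (nhds y) := by
    have h0' : Tendsto (fun n => x n - y) atTop (nhds 0) := by
      simpa using hxy.sub_const y
    have h0 : Tendsto (fun n => |x n - y|) atTop (nhds 0) := by
      simpa using h0'.abs
    have h1 : Tendsto (fun n => |ξ n - y|) atTop (nhds 0) :=
      squeeze_zero (fun n => abs_nonneg _) hξ1 h0
    have h2 : Tendsto (fun n => ξ n - y) atTop (nhds 0) :=
      (tendsto_zero_iff_abs_tendsto_zero _).mpr h1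
    simpa using h2.add_const y
  -- Step F : A n → η₃ (y²+2) gauss y / 12
  set A : ℕ → ℝ := fun n => Real.sqrt n * (normCDF (x n) - v) with hA
  have hAlim : Tendsto A atTop (nhds (η₃ * (y ^ 2 + 2) * gauss y / 12)) := by
    set B : ℕ → ℝ := fun n => η₃ * ((x n) ^ 2 + 2) * gauss (x n) / 12 with hB
    have hBlim : Tendsto B atTop (nhds (η₃ * (y ^ 2 + 2) * gauss y / 12)) := by
      have hc : Continuous (fun z : ℝ => η₃ * (z ^ 2 + 2) * gauss z / 12) := by
        have := gauss_cont; fun_prop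
      exact (hc.tendsto y).comp hxy
    have hdiff : Tendsto (fun n => A n - B n) atTop (nhds 0) := by
      refine (tendsto_zero_iff_abs_tendsto_zero _).mpr ?_
      apply squeeze_zero' (Eventually.of_forall fun n => abs_nonneg _)
        ((eventually_ge_atTop 1).mono fun n hn => ?_) hso
      have h1 : 0 < Real.sqrt n := hsqpos n hn
      have heq : A n - B n
          = Real.sqrt n * ((normCDF (x n) - η₃ * ((x n) ^ 2 + 2) / (12 * Real.sqrt n)
              * gauss (x n)) - v) := by
        simp only [hA, hB]
        field_simp
        ring
      rw [heq, abs_mul, abs_of_pos h1]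
      apply mul_le_mul_of_nonneg_left _ h1.le
      rw [← abs_neg]
      rw [neg_sub]
      exact hkey n hn
    have := hdiff.add hBlim
    simp only [sub_add_cancel, zero_add] at this
    exact this
  -- Step G : identity and final limit
  have hid : ∀ n : ℕ, Real.sqrt n * (x n - y) = A n / gauss (ξ n) := by
    intro n
    have h2 := hξ2 n
    rw [hy] at h2
    show Real.sqrt n * (x n - y) = Real.sqrt n * (normCDF (x n) - v) / gauss (ξ n)
    rw [h2]
    field_simp [(gauss_pos (ξ n)).ne']
  have hgξ : Tendsto (fun n => gauss (ξ n)) atTop (nhds (gauss y)) :=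
    (gauss_cont.tendsto y).comp hξy
  have hH : Tendsto (fun n : ℕ => Real.sqrt n * (x n - y)) atTop
      (nhds (η₃ * (y ^ 2 + 2) / 12)) := by
    have := hAlim.div hgξ (gauss_pos y).ne'
    have heq : η₃ * (y ^ 2 + 2) * gauss y / 12 / gauss y = η₃ * (y ^ 2 + 2) / 12 := by
      field_simp [(gauss_pos y).ne']
    rw [heq] at this
    exact this.congr fun n => (hid n).symm
  -- conclude
  have := hH.sub_const (η₃ * (y ^ 2 + 2) / 12)
  rw [sub_self] at this
  apply this.congr' ((eventually_ge_atTop 1).mono fun n hn => ?_)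
  have h1 : Real.sqrt n ≠ 0 := (hsqpos n hn).ne'
  field_simp
  ring
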